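/- Let (G,𝒳,k) be a VDP instance where G is a split graph with split partition (C, I) such that (i) every vertex of I appears in some terminal pair of 𝒳, (ii) for every terminal pair (s,t) ∈ 𝒳 with exactly one endpoint in C and the other in I, st ∉ E(G), and (iii) no terminal pair with both endpoints in C occurs more than once in 𝒳. Suppose a vertex v ∈ V(G) belongs to x ≥ 2 occurrences of terminal pairs (v,a_1), …, (v,a_x) in 𝒳. Let G' be obtained from G by deleting v and adding x new vertices v_1, …, v_x, each adjacent to every vertex of N_G(v), where additionally v_1, …, v_x are made pairwise adjacent if v ∈ C; and let 𝒳' be obtained from 𝒳 by replacing the occurrences (v,a_1), …, (v,a_x) with (v_1,a_1), …, (v_x,a_x). Then (G, 𝒳, k) is a Yes-instance of VDP if and only if (G', 𝒳', k) is a Yes-instance of VDP. -/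

import Mathlib

open SimpleGraph Finset

/-- A family of walks in `G` connecting the terminal pairs `X`. -/
abbrev WalkFamily {V : Type*} (G : SimpleGraph V) {ι : Type*} (X : ι → V × V) :=
  ∀ i : ι, G.Walk (X i).1 (X i).2

/-- No internal vertex of one walk of the family lies on any other walk. -/
def PairwiseInternallyDisjoint {V : Type*} (G : SimpleGraph V) {ι : Type*}
    (X : ι → V × V) (P : WalkFamily G X) : Prop :=
  ∀ i j : ι, i ≠ j → ∀ x : V, x ∈ (P i).support.tail.dropLast → x ∉ (P j).support

/-- A solution of the Vertex-Disjoint Paths (VDP) instance `(G, X)`: a family of pairwise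
distinct paths connecting the terminal pairs that are pairwise internally vertex-disjoint. -/
def IsVDPSolution {V : Type*} (G : SimpleGraph V) {ι : Type*} (X : ι → V × V)
    (P : WalkFamily G X) : Prop :=
  (∀ i, (P i).IsPath) ∧
  (∀ i j : ι, i ≠ j → (P i).support ≠ (P j).support) ∧
  PairwiseInternallyDisjoint G X P

/-- `(G, X)` is a Yes-instance of VDP. -/
def VDPYes {V : Type*} (G : SimpleGraph V) {ι : Type*} (X : ι → V × V) : Prop :=
  ∃ P : WalkFamily G X, IsVDPSolution G X P

/-- `(C, I)` is a split partition of `G`: `V(G)` is the disjoint union of `C` and `I`,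
`C` induces a clique, and `I` is an independent set. -/
def IsSplitPartition {V : Type*} (G : SimpleGraph V) (C I : Finset V) : Prop :=
  (∀ x : V, x ∈ C ∨ x ∈ I) ∧ (∀ x : V, ¬ (x ∈ C ∧ x ∈ I)) ∧
  (∀ x ∈ C, ∀ y ∈ C, x ≠ y → G.Adj x y) ∧ (∀ x ∈ I, ∀ y ∈ I, ¬ G.Adj x y)

/-- `y` is a terminal vertex: it appears in at least one terminal pair of `X`. -/
def IsTerminal {V : Type*} {ι : Type*} (X : ι → V × V) (y : V) : Prop :=
  ∃ i : ι, (X i).1 = y ∨ (X i).2 = y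

/-- The graph obtained from `G` by deleting the vertex `v` (here: isolating it) and adding
`x` copies of `v`, each adjacent to every neighbor of `v` in `G`, the copies being pairwise
adjacent exactly when `inClique` holds. -/
def splitVertexGraph {V : Type*} (G : SimpleGraph V) (v : V) (inClique : Prop)
    (x : ℕ) : SimpleGraph (V ⊕ Fin x) where
  Adj p q :=
    match p, q with
    | Sum.inl a, Sum.inl b => G.Adj a b ∧ a ≠ v ∧ b ≠ v
    | Sum.inl a, Sum.inr _ => G.Adj a v
    | Sum.inr _, Sum.inl b => G.Adj b v
    | Sum.inr i, Sum.inr j => i ≠ j ∧ inClique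
  symm := by
    refine ⟨?_⟩
    rintro (a | a) (b | b) h
    · exact ⟨h.1.symm, h.2.2, h.2.1⟩
    · exact h
    · exact h
    · exact ⟨h.1.symm, h.2⟩
  loopless := by
    refine ⟨?_⟩
    rintro (a | a) h
    · exact G.irrefl h.1
    · exact h.1 rfl

/-- The terminal pairs obtained from `X` by replacing, in each occurrence of a terminal
pair containing `v`, the vertex `v` by a fresh copy (a distinct copy for each occurrence,
chosen via the equivalence `e`). -/
def replacedPairs {V : Type*} [DecidableEq V] {k x : ℕ} (X : Fin k → V × V) (v : V)
    (e : {i : Fin k // (X i).1 = v ∨ (X i).2 = v} ≃ Fin x) :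
    Fin k → (V ⊕ Fin x) × (V ⊕ Fin x) := fun i =>
  if h1 : (X i).1 = v then (Sum.inr (e ⟨i, Or.inl h1⟩), Sum.inl (X i).2)
  else if h2 : (X i).2 = v then (Sum.inl (X i).1, Sum.inr (e ⟨i, Or.inr h2⟩))
  else (Sum.inl (X i).1, Sum.inl (X i).2)

section VDPaux
variable {α : Type*} {W : Type*} {H : SimpleGraph W}

lemma vdp_dropLast_cons {a : α} {l : List α} (h : l ≠ []) :
    (a :: l).dropLast = a :: l.dropLast := by
  cases l with
  | nil => exact absurd rfl h
  | cons b m => simp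

lemma vdp_tail_dropLast (l : List α) : l.dropLast.tail = l.tail.dropLast := by
  cases l with
  | nil => rfl
  | cons a l =>
    cases l with
    | nil => rfl
    | cons b m => simp [vdp_dropLast_cons]

lemma vdp_support_concat {a b : W} (w : H.Walk a b) :
    w.support = w.support.dropLast ++ [b] := by
  induction w with
  | nil => rfl
  | @cons u c d h w ih =>
    rw [Walk.support_cons]
    conv_lhs => rw [ih]
    rw [vdp_dropLast_cons w.support_ne_nil, ih, List.cons_append]

lemma vdp_internal_subset {a b : W} (w : H.Walk a b) :
    ∀ z ∈ w.support.tail.dropLast, z ∈ w.support := fun z hz =>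
  ((List.dropLast_sublist _).trans (List.tail_sublist _)).mem hz

lemma vdp_tail_ne_nil {a b : W} (w : H.Walk a b) (hab : a ≠ b) :
    w.support.tail ≠ [] := by
  cases w with
  | nil => exact absurd rfl hab
  | cons h w => simpa using w.support_ne_nil

lemma vdp_not_mem_dropLast {a b : W} (w : H.Walk a b) (hw : w.IsPath) :
    b ∉ w.support.dropLast := by
  intro hb
  have hnd := hw.support_nodup
  rw [vdp_support_concat w] at hnd
  have := (List.disjoint_of_nodup_append hnd) hb (by simp)
  exact this

lemma vdp_mem_internal {a b : W} (w : H.Walk a b) {u : W} (hu : u ∈ w.support)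
    (h1 : u ≠ a) (h2 : u ≠ b) : u ∈ w.support.tail.dropLast := by
  have hdl : u ∈ w.support.dropLast := by
    rcases (List.mem_append.mp ((vdp_support_concat w) ▸ hu)) with h | h
    · exact h
    · simp at h; exact absurd h h2
  have htail : u ∈ w.support.tail := by
    have := w.support_eq_cons ▸ hu
    rcases List.mem_cons.mp this with h | h
    · exact absurd h h1
    · exact h
  have htne : w.support.tail ≠ [] := by intro h; rw [h] at htail; simp at htail
  have heq : w.support.dropLast = a :: w.support.tail.dropLast := by
    conv_lhs => rw [w.support_eq_cons]
    rw [vdp_dropLast_cons htne]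
  rw [heq] at hdl
  rcases List.mem_cons.mp hdl with h | h
  · exact absurd h h1
  · exact h

lemma vdp_endpoint_not_internal_left {a b : W} (w : H.Walk a b) (hw : w.IsPath) :
    a ∉ w.support.tail.dropLast := by
  intro ha
  have hnd := hw.support_nodup
  rw [w.support_eq_cons] at hnd
  exact (List.nodup_cons.mp hnd).1 ((List.dropLast_sublist _).mem ha)

lemma vdp_endpoint_not_internal_right {a b : W} (w : H.Walk a b) (hw : w.IsPath) :
    b ∉ w.support.tail.dropLast := by
  intro hb
  rw [← vdp_tail_dropLast] at hb
  exact vdp_not_mem_dropLast w hw ((List.tail_sublist _).mem hb)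

lemma vdp_eq_endpoint {a b : W} (w : H.Walk a b) {u : W} (hu : u ∈ w.support)
    (h : u ∉ w.support.tail.dropLast) : u = a ∨ u = b := by
  by_cases h1 : u = a
  · exact Or.inl h1
  · by_cases h2 : u = b
    · exact Or.inr h2
    · exact absurd (vdp_mem_internal w hu h1 h2) h

lemma vdp_support_pair_of_length {a b : W} (w : H.Walk a b) (hab : a ≠ b)
    (hlen : w.support.length = 2) : w.support = [a, b] := by
  have hlt : w.support.tail.length = 1 := by
    have := w.support_eq_cons
    have h2 := congrArg List.length this
    rw [hlen] at h2
    simp only [List.length_cons] at h2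
    omega
  obtain ⟨u, hu⟩ := List.length_eq_one_iff.mp hlt
  have hsup : w.support = [a, u] := by
    conv_lhs => rw [w.support_eq_cons]
    rw [hu]
  have hb : b ∈ w.support := w.end_mem_support
  rw [hsup] at hb
  rcases List.mem_cons.mp hb with h3 | h3
  · exact absurd h3.symm hab
  · simp only [List.mem_singleton] at h3
    rw [hsup, h3]

lemma vdp_support_pair {a b : W} (w : H.Walk a b) (hab : a ≠ b)
    (h : w.support.tail.dropLast = []) : w.support = [a, b] := by
  have htne := vdp_tail_ne_nil w hab
  refine vdp_support_pair_of_length w hab ?_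
  have h1 := @List.length_dropLast _ w.support.tail
  rw [h] at h1
  simp only [List.length_nil] at h1
  have h2 := List.length_pos_iff.mpr htne
  have h3 := congrArg List.length w.support_eq_cons
  simp only [List.length_cons] at h3
  omega

lemma vdp_adj_of_support_pair {a b : W} (w : H.Walk a b) (h : w.support = [a, b]) :
    H.Adj a b := by
  cases w with
  | nil => simp at h
  | @cons _ c _ h' w =>
    have hs : w.support = [b] := by simpa using h
    have hc : c = b := by
      have h2 := w.support_eq_cons
      rw [hs] at h2
      exact (List.cons.injEq _ _ _ _ ▸ h2).1.symm
    exact hc ▸ h'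

lemma vdp_exists_adj_aux {a b : W} (w : H.Walk a b) {u : W} (hu : u ∈ w.support) :
    (∃ z, H.Adj u z) ∨ u = b := by
  induction w with
  | nil => right; simpa using hu
  | @cons s c d h w ih =>
    rw [Walk.support_cons] at hu
    rcases List.mem_cons.mp hu with h1 | h1
    · exact Or.inl ⟨c, h1 ▸ h⟩
    · exact ih h1

lemma vdp_exists_adj {a b : W} (w : H.Walk a b) (hab : a ≠ b) {u : W}
    (hu : u ∈ w.support) : ∃ z, H.Adj u z := by
  rcases vdp_exists_adj_aux w hu with h | h
  · exact h
  · rcases vdp_exists_adj_aux w.reverse (by rw [Walk.support_reverse]; exact List.mem_reverse.mpr hu) with h2 | h2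
    · exact h2
    · exact absurd (h2.symm.trans h) hab

lemma vdp_start_not_mem_tail {a b : W} (w : H.Walk a b) (hw : w.IsPath) :
    a ∉ w.support.tail := by
  have hnd := hw.support_nodup
  rw [w.support_eq_cons] at hnd
  exact (List.nodup_cons.mp hnd).1

lemma vdp_tail_nodup {a b : W} (w : H.Walk a b) (hw : w.IsPath) :
    w.support.tail.Nodup := by
  have hnd := hw.support_nodup
  rw [w.support_eq_cons] at hnd
  exact (List.nodup_cons.mp hnd).2

end VDPaux

section VDPaux2
open SimpleGraph List
variable {V : Type*} {G : SimpleGraph V} {v : V} {ic : Prop} {x : ℕ}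

def vdpToV (v : V) {x : ℕ} : V ⊕ Fin x → V := Sum.elim id fun _ => v

@[simp] lemma vdpToV_inl {a : V} : vdpToV v (Sum.inl a : V ⊕ Fin x) = a := rfl
@[simp] lemma vdpToV_inr {j : Fin x} : vdpToV v (Sum.inr j : V ⊕ Fin x) = v := rfl

lemma vdp_inlv_isolated {z : V ⊕ Fin x} : ¬ (splitVertexGraph G v ic x).Adj (Sum.inl v) z := by
  rcases z with b | j
  · rintro ⟨-, h, -⟩; exact h rfl
  · intro h; exact G.irrefl h

lemma vdp_lower_adj {p q : V ⊕ Fin x} (h : (splitVertexGraph G v ic x).Adj p q)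
    (hno : ∀ i j : Fin x, p = Sum.inr i → q = Sum.inr j → False) :
    G.Adj (vdpToV v p) (vdpToV v q) := by
  rcases p with a | i <;> rcases q with b | j
  · exact h.1
  · exact h
  · exact (show G.Adj b v from h).symm
  · exact (hno i j rfl rfl).elim

def vdpLift (ic : Prop) (x : ℕ) :
    ∀ {a b : V} (w : G.Walk a b), (∀ u ∈ w.support, u ≠ v) →
      (splitVertexGraph G v ic x).Walk (Sum.inl a) (Sum.inl b)
  | _, _, Walk.nil, _ => Walk.nil
  | _, _, @Walk.cons _ _ a c _ h w, hs =>
      Walk.cons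
        (show (splitVertexGraph G v ic x).Adj (Sum.inl a) (Sum.inl c) from
          ⟨h, hs a (by rw [Walk.support_cons]; exact List.mem_cons_self),
            hs c (by rw [Walk.support_cons]; exact List.mem_cons_of_mem _ w.start_mem_support)⟩)
        (vdpLift ic x w (fun u hu => hs u (by rw [Walk.support_cons]; exact List.mem_cons_of_mem _ hu)))

lemma vdpLift_support : ∀ {a b : V} (w : G.Walk a b) (hs : ∀ u ∈ w.support, u ≠ v),
    (vdpLift (G := G) ic x w hs).support = w.support.map Sum.inl
  | _, _, Walk.nil, _ => rfl
  | _, _, @Walk.cons _ _ a c _ h w, hs => by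
      simp only [vdpLift, Walk.support_cons, List.map_cons]
      rw [vdpLift_support w]

def vdpLiftCopy (ic : Prop) {x : ℕ} (j : Fin x) :
    ∀ {b : V} (w : G.Walk v b), (∀ u ∈ w.support.tail, u ≠ v) → b ≠ v →
      (splitVertexGraph G v ic x).Walk (Sum.inr j) (Sum.inl b)
  | _, Walk.nil, _, hb => absurd rfl hb
  | _, @Walk.cons _ _ _ c _ h w, hs, hb =>
      Walk.cons (show (splitVertexGraph G v ic x).Adj (Sum.inr j) (Sum.inl c) from h.symm)
        (vdpLift ic x w (fun u hu => hs u (by rw [Walk.support_cons, List.tail_cons]; exact hu)))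

lemma vdpLiftCopy_support : ∀ {b : V} (w : G.Walk v b) (hs : ∀ u ∈ w.support.tail, u ≠ v) (hb : b ≠ v),
    (vdpLiftCopy (G := G) ic j w hs hb).support = Sum.inr j :: w.support.tail.map Sum.inl
  | _, Walk.nil, _, hb => absurd rfl hb
  | _, @Walk.cons _ _ _ c _ h w, hs, hb => by
      simp only [vdpLiftCopy, Walk.support_cons, List.tail_cons]
      rw [vdpLift_support w]

def vdpLower (ic : Prop) (x : ℕ) :
    ∀ {p q : V ⊕ Fin x} (w : (splitVertexGraph G v ic x).Walk p q),
      (∀ i j : Fin x, Sum.inr i ∈ w.support → Sum.inr j ∈ w.support → i = j) →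
      G.Walk (vdpToV v p) (vdpToV v q)
  | _, _, Walk.nil, _ => Walk.nil
  | _, _, @Walk.cons _ _ p c q h w, hone =>
      Walk.cons
        (vdp_lower_adj h (fun i j hp hq => by
          subst hp; subst hq
          have hij : i = j := hone i j
            (by rw [Walk.support_cons]; exact List.mem_cons_self)
            (by rw [Walk.support_cons]; exact List.mem_cons_of_mem _ w.start_mem_support)
          subst hij
          exact (splitVertexGraph G v ic x).irrefl h))
        (vdpLower ic x w (fun i j hi hj => hone i j
          (by rw [Walk.support_cons]; exact List.mem_cons_of_mem _ hi)
          (by rw [Walk.support_cons]; exact List.mem_cons_of_mem _ hj)))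

lemma vdpLower_support : ∀ {p q : V ⊕ Fin x} (w : (splitVertexGraph G v ic x).Walk p q)
    (hone : ∀ i j : Fin x, Sum.inr i ∈ w.support → Sum.inr j ∈ w.support → i = j),
    (vdpLower (G := G) ic x w hone).support = w.support.map (vdpToV v)
  | _, _, Walk.nil, _ => rfl
  | _, _, @Walk.cons _ _ p c q h w, hone => by
      simp only [vdpLower, Walk.support_cons, List.map_cons]
      rw [vdpLower_support w]

end VDPaux2

/-- Safeness of reduction rule RR3 on split graphs: if a vertex `v` appears
in `x ≥ 2` occurrences of terminal pairs, replacing `v` with `x` fresh copies (each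
adjacent to all neighbors of `v`, pairwise adjacent iff `v` is on the clique side, with
`v` itself deleted) and distributing the occurrences among the copies preserves the answer
of VDP. -/
theorem vdp_split_rr3 {V : Type*} [DecidableEq V] (G : SimpleGraph V)
    (C I : Finset V) (hsplit : IsSplitPartition G C I)
    {k : ℕ} (X : Fin k → V × V) (hX : ∀ i, (X i).1 ≠ (X i).2)
    (hIterm : ∀ y ∈ I, IsTerminal X y)
    (hTypeI : ∀ i : Fin k,
      (((X i).1 ∈ C ∧ (X i).2 ∈ I) ∨ ((X i).1 ∈ I ∧ (X i).2 ∈ C)) →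
        ¬ G.Adj (X i).1 (X i).2)
    (hTypeII : ∀ s t : V, s ∈ C → t ∈ C →
      (Finset.univ.filter (fun i : Fin k => X i = (s, t) ∨ X i = (t, s))).card ≤ 1)
    (v : V) {x : ℕ} (hx : 2 ≤ x)
    (e : {i : Fin k // (X i).1 = v ∨ (X i).2 = v} ≃ Fin x) :
    VDPYes G X ↔ VDPYes (splitVertexGraph G v (v ∈ C) x) (replacedPairs X v e) := by
  classical
  have hX'1 : ∀ (i : Fin k) (h1 : (X i).1 = v),
      replacedPairs X v e i = (Sum.inr (e ⟨i, Or.inl h1⟩), Sum.inl (X i).2) := by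
    intro i h1
    simp only [replacedPairs, dif_pos h1]
  have hX'2 : ∀ (i : Fin k) (h1 : (X i).1 ≠ v) (h2 : (X i).2 = v),
      replacedPairs X v e i = (Sum.inl (X i).1, Sum.inr (e ⟨i, Or.inr h2⟩)) := by
    intro i h1 h2
    simp only [replacedPairs, dif_neg h1, dif_pos h2]
  have hX'3 : ∀ (i : Fin k) (h1 : (X i).1 ≠ v) (h2 : (X i).2 ≠ v),
      replacedPairs X v e i = (Sum.inl (X i).1, Sum.inl (X i).2) := by
    intro i h1 h2
    simp only [replacedPairs, dif_neg h1, dif_neg h2]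
  have htoV1 : ∀ i : Fin k, vdpToV v (replacedPairs X v e i).1 = (X i).1 := by
    intro i
    by_cases h1 : (X i).1 = v
    · rw [hX'1 i h1]; exact h1.symm
    · by_cases h2 : (X i).2 = v
      · rw [hX'2 i h1 h2]; rfl
      · rw [hX'3 i h1 h2]; rfl
  have htoV2 : ∀ i : Fin k, vdpToV v (replacedPairs X v e i).2 = (X i).2 := by
    intro i
    by_cases h1 : (X i).1 = v
    · rw [hX'1 i h1]; rfl
    · by_cases h2 : (X i).2 = v
      · rw [hX'2 i h1 h2]; exact h2.symm
      · rw [hX'3 i h1 h2]; rfl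
  have hX'ne : ∀ i : Fin k, (replacedPairs X v e i).1 ≠ (replacedPairs X v e i).2 := by
    intro i
    by_cases h1 : (X i).1 = v
    · rw [hX'1 i h1]; simp
    · by_cases h2 : (X i).2 = v
      · rw [hX'2 i h1 h2]; simp
      · rw [hX'3 i h1 h2]; simp [hX i]
  constructor
  · -- forward direction
    rintro ⟨P, hp, hd, hpid⟩
    have hvend : ∀ i : Fin k, ((X i).1 = v ∨ (X i).2 = v) → v ∈ (P i).support := by
      rintro i (h | h)
      · exact h ▸ (P i).start_mem_support
      · exact h ▸ (P i).end_mem_support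
    have hex2 : ∀ l : Fin k, ∃ m : Fin k, ((X m).1 = v ∨ (X m).2 = v) ∧ m ≠ l := by
      intro l
      have m0 := e.symm ⟨0, by omega⟩
      have hne01 : (⟨0, by omega⟩ : Fin x) ≠ ⟨1, by omega⟩ := by
        intro h; simpa using congrArg Fin.val h
      have hmm : e.symm ⟨0, by omega⟩ ≠ e.symm ⟨1, by omega⟩ := fun h => hne01 (e.symm.injective h)
      by_cases h : (e.symm ⟨0, by omega⟩).1 = l
      · exact ⟨(e.symm ⟨1, by omega⟩).1, (e.symm ⟨1, by omega⟩).2,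
          fun hh => hmm (Subtype.ext (h.trans hh.symm))⟩
      · exact ⟨(e.symm ⟨0, by omega⟩).1, (e.symm ⟨0, by omega⟩).2, h⟩
    have hvnotint : ∀ l : Fin k, v ∉ (P l).support.tail.dropLast := by
      intro l hint
      obtain ⟨m, hm, hml⟩ := hex2 l
      exact hpid l m hml.symm v hint (hvend m hm)
    have hvnot : ∀ l : Fin k, (X l).1 ≠ v → (X l).2 ≠ v → v ∉ (P l).support := by
      intro l h1 h2 hm
      exact hvnotint l (vdp_mem_internal (P l) hm h1.symm h2.symm)
    have htailne : ∀ i : Fin k, (P i).support.tail ≠ [] := fun i => vdp_tail_ne_nil (P i) (hX i)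
    have hdlne : ∀ i : Fin k, (P i).support.dropLast ≠ [] := by
      intro i h
      have hc := vdp_support_concat (P i)
      rw [h, List.nil_append] at hc
      exact htailne i (by simp [hc])
    have hQex : ∃ Q : WalkFamily (splitVertexGraph G v (v ∈ C) x) (replacedPairs X v e),
        ∀ i : Fin k,
          (∃ h1 : (X i).1 = v,
            (Q i).support = Sum.inr (e ⟨i, Or.inl h1⟩) :: (P i).support.tail.map Sum.inl)
          ∨ (∃ (h1 : (X i).1 ≠ v) (h2 : (X i).2 = v),
            (Q i).support = ((P i).support.dropLast.map Sum.inl) ++ [Sum.inr (e ⟨i, Or.inr h2⟩)])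
          ∨ ((X i).1 ≠ v ∧ (X i).2 ≠ v ∧ (Q i).support = (P i).support.map Sum.inl) := by
      refine ⟨fun i =>
        if h1 : (X i).1 = v then
          ((vdpLiftCopy (v ∈ C) (e ⟨i, Or.inl h1⟩) ((P i).copy h1 rfl)
            (by
              intro u hu
              rw [SimpleGraph.Walk.support_copy] at hu
              rintro rfl
              exact vdp_start_not_mem_tail (P i) (hp i) (h1.symm ▸ hu))
            (fun h2 => hX i (h1.trans h2.symm))).copy
            (congrArg Prod.fst (hX'1 i h1)).symm (congrArg Prod.snd (hX'1 i h1)).symm)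
        else if h2 : (X i).2 = v then
          (((vdpLiftCopy (v ∈ C) (e ⟨i, Or.inr h2⟩) ((P i).copy rfl h2).reverse
            (by
              intro u hu
              rw [SimpleGraph.Walk.support_reverse, SimpleGraph.Walk.support_copy,
                List.tail_reverse, List.mem_reverse] at hu
              rintro rfl
              exact vdp_not_mem_dropLast (P i) (hp i) (h2.symm ▸ hu))
            h1).reverse).copy
            (congrArg Prod.fst (hX'2 i h1 h2)).symm (congrArg Prod.snd (hX'2 i h1 h2)).symm)
        else
          ((vdpLift (v ∈ C) x (P i)
            (fun u hu hv => hvnot i h1 h2 (by rw [← hv]; exact hu))).copy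
            (congrArg Prod.fst (hX'3 i h1 h2)).symm (congrArg Prod.snd (hX'3 i h1 h2)).symm),
        ?_⟩
      intro i
      by_cases h1 : (X i).1 = v
      · left
        refine ⟨h1, ?_⟩
        simp only [dif_pos h1]
        rw [SimpleGraph.Walk.support_copy, vdpLiftCopy_support, SimpleGraph.Walk.support_copy]
      · by_cases h2 : (X i).2 = v
        · right; left
          refine ⟨h1, h2, ?_⟩
          simp only [dif_neg h1, dif_pos h2]
          rw [SimpleGraph.Walk.support_copy, SimpleGraph.Walk.support_reverse,
            vdpLiftCopy_support, List.reverse_cons, SimpleGraph.Walk.support_reverse,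
            SimpleGraph.Walk.support_copy, List.tail_reverse, List.map_reverse,
            List.reverse_reverse]
        · right; right
          refine ⟨h1, h2, ?_⟩
          simp only [dif_neg h1, dif_neg h2]
          rw [SimpleGraph.Walk.support_copy, vdpLift_support]
    obtain ⟨Q, hQs⟩ := hQex
    have hQint : ∀ i : Fin k,
        (Q i).support.tail.dropLast = ((P i).support.tail.dropLast).map Sum.inl := by
      intro i
      rcases hQs i with ⟨h1, hs⟩ | ⟨h1, h2, hs⟩ | ⟨h1, h2, hs⟩
      · rw [hs, List.tail_cons, ← List.map_dropLast]
      · rw [hs]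
        have hLne : ((P i).support.dropLast.map Sum.inl : List (V ⊕ Fin x)) ≠ [] := by
          intro h
          exact hdlne i (List.map_eq_nil_iff.mp h)
        rw [List.tail_append_of_ne_nil hLne, List.dropLast_concat, ← List.map_tail,
          vdp_tail_dropLast]
      · rw [hs, ← List.map_tail, ← List.map_dropLast]
    have hQsub : ∀ (i : Fin k) (a : V), Sum.inl a ∈ (Q i).support → a ∈ (P i).support := by
      intro i a ha
      rcases hQs i with ⟨h1, hs⟩ | ⟨h1, h2, hs⟩ | ⟨h1, h2, hs⟩ <;> rw [hs] at ha
      · rcases List.mem_cons.mp ha with h | h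
        · exact absurd h (by simp)
        · obtain ⟨b, hb, hba⟩ := List.mem_map.mp h
          rw [← Sum.inl_injective hba]
          exact (List.tail_sublist _).mem hb
      · rcases List.mem_append.mp ha with h | h
        · obtain ⟨b, hb, hba⟩ := List.mem_map.mp h
          rw [← Sum.inl_injective hba]
          exact (List.dropLast_sublist _).mem hb
        · rw [List.mem_singleton] at h
          exact absurd h (by simp)
      · obtain ⟨b, hb, hba⟩ := List.mem_map.mp ha
        rw [← Sum.inl_injective hba]
        exact hb
    have hQpid : PairwiseInternallyDisjoint (splitVertexGraph G v (v ∈ C) x)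
        (replacedPairs X v e) Q := by
      intro i j hne z hz hmem
      rw [hQint i] at hz
      obtain ⟨a, ha, rfl⟩ := List.mem_map.mp hz
      exact hpid i j hne a ha (hQsub j a hmem)
    refine ⟨Q, ?_, ?_, hQpid⟩
    · intro i
      rw [SimpleGraph.Walk.isPath_def]
      have hnd := (hp i).support_nodup
      rcases hQs i with ⟨h1, hs⟩ | ⟨h1, h2, hs⟩ | ⟨h1, h2, hs⟩ <;> rw [hs]
      · refine List.nodup_cons.mpr ⟨?_, ?_⟩
        · intro hmem
          obtain ⟨b, -, hb⟩ := List.mem_map.mp hmem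
          exact nomatch hb
        · exact List.Nodup.map Sum.inl_injective (vdp_tail_nodup (P i) (hp i))
      · refine List.Nodup.append ?_ (List.nodup_singleton _) ?_
        · exact List.Nodup.map Sum.inl_injective ((List.dropLast_sublist _).nodup hnd)
        · intro z hz hz2
          rw [List.mem_singleton] at hz2
          subst hz2
          obtain ⟨b, -, hb⟩ := List.mem_map.mp hz
          exact nomatch hb
      · exact List.Nodup.map Sum.inl_injective hnd
    · intro i j hne heq
      have hIi : (Q i).support.tail.dropLast = [] := by
        rw [List.eq_nil_iff_forall_not_mem]
        intro z hz
        exact hQpid i j hne z hz (by rw [← heq]; exact vdp_internal_subset (Q i) z hz)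
      have hIj : (Q j).support.tail.dropLast = [] := by
        rw [List.eq_nil_iff_forall_not_mem]
        intro z hz
        exact hQpid j i hne.symm z hz (by rw [heq]; exact vdp_internal_subset (Q j) z hz)
      have hpi := vdp_support_pair (Q i) (hX'ne i) hIi
      have hpj := vdp_support_pair (Q j) (hX'ne j) hIj
      rw [hpi, hpj] at heq
      simp only [List.cons.injEq, and_true] at heq
      obtain ⟨e1, e2⟩ := heq
      rcases hQs i with ⟨h1i, hsi⟩ | ⟨h1i, h2i, hsi⟩ | ⟨h1i, h2i, hsi⟩ <;>
        rcases hQs j with ⟨h1j, hsj⟩ | ⟨h1j, h2j, hsj⟩ | ⟨h1j, h2j, hsj⟩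
      · rw [hX'1 i h1i, hX'1 j h1j] at e1
        simp only [Sum.inr.injEq] at e1
        exact hne (congrArg Subtype.val (e.injective e1))
      · rw [hX'1 i h1i, hX'2 j h1j h2j] at e1
        simp at e1
      · rw [hX'1 i h1i, hX'3 j h1j h2j] at e1
        simp at e1
      · rw [hX'2 i h1i h2i, hX'1 j h1j] at e1
        simp at e1
      · rw [hX'2 i h1i h2i, hX'2 j h1j h2j] at e2
        simp only [Sum.inr.injEq] at e2
        exact hne (congrArg Subtype.val (e.injective e2))
      · rw [hX'2 i h1i h2i, hX'3 j h1j h2j] at e2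
        simp at e2
      · rw [hX'3 i h1i h2i, hX'1 j h1j] at e1
        simp at e1
      · rw [hX'3 i h1i h2i, hX'2 j h1j h2j] at e2
        simp at e2
      · rw [hX'3 i h1i h2i, hX'3 j h1j h2j] at e1 e2
        simp only [Sum.inl.injEq] at e1 e2
        have hspi : (P i).support = [(X i).1, (X i).2] := by
          have : (P i).support.map Sum.inl
              = ([(X i).1, (X i).2].map Sum.inl : List (V ⊕ Fin x)) := by
            rw [← hsi, hpi, hX'3 i h1i h2i]
            rfl
          exact List.map_injective_iff.mpr Sum.inl_injective this
        have hspj : (P j).support = [(X j).1, (X j).2] := by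
          have : (P j).support.map Sum.inl
              = ([(X j).1, (X j).2].map Sum.inl : List (V ⊕ Fin x)) := by
            rw [← hsj, hpj, hX'3 j h1j h2j]
            rfl
          exact List.map_injective_iff.mpr Sum.inl_injective this
        exact hd i j hne (by rw [hspi, hspj, e1, e2])
  · -- backward direction
    rintro ⟨Q, hQp, hQd, hQpid⟩
    have hQep : ∀ m : {i : Fin k // (X i).1 = v ∨ (X i).2 = v},
        (replacedPairs X v e m.1).1 = Sum.inr (e m) ∨
        (replacedPairs X v e m.1).2 = Sum.inr (e m) := by
      intro m
      by_cases h1 : (X m.1).1 = v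
      · left
        rw [hX'1 m.1 h1]
      · right
        rw [hX'2 m.1 h1 (m.2.resolve_left h1)]
    have hiend : ∀ j : Fin x, Sum.inr j ∈ (Q (e.symm j).1).support := by
      intro j
      rcases hQep (e.symm j) with h | h <;> rw [e.apply_symm_apply] at h
      · rw [← h]
        exact (Q _).start_mem_support
      · rw [← h]
        exact (Q _).end_mem_support
    have hnoinlv : ∀ l : Fin k, Sum.inl v ∉ (Q l).support := by
      intro l hmem
      obtain ⟨z, hz⟩ := vdp_exists_adj (Q l) (hX'ne l) hmem
      exact vdp_inlv_isolated hz
    have hnotint : ∀ (j : Fin x) (l : Fin k), Sum.inr j ∉ (Q l).support.tail.dropLast := by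
      intro j l hint
      by_cases hl : l = (e.symm j).1
      · subst hl
        rcases hQep (e.symm j) with h | h <;> rw [e.apply_symm_apply] at h <;>
          rw [← h] at hint
        · exact vdp_endpoint_not_internal_left (Q _) (hQp _) hint
        · exact vdp_endpoint_not_internal_right (Q _) (hQp _) hint
      · exact hQpid l (e.symm j).1 hl _ hint (hiend j)
    have hone : ∀ l : Fin k, ∀ i j : Fin x,
        Sum.inr i ∈ (Q l).support → Sum.inr j ∈ (Q l).support → i = j := by
      intro l i j hi hj
      have hei := vdp_eq_endpoint (Q l) hi (hnotint i l)
      have hej := vdp_eq_endpoint (Q l) hj (hnotint j l)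
      by_cases h1 : (X l).1 = v
      · rw [hX'1 l h1] at hei hej
        simp only [Sum.inr.injEq, reduceCtorEq, or_false] at hei hej
        rw [hei, hej]
      · by_cases h2 : (X l).2 = v
        · rw [hX'2 l h1 h2] at hei hej
          simp only [Sum.inr.injEq, reduceCtorEq, false_or] at hei hej
          rw [hei, hej]
        · rw [hX'3 l h1 h2] at hei
          simp at hei
    obtain ⟨R, hRs⟩ : ∃ R : WalkFamily G X, ∀ l : Fin k,
        (R l).support = (Q l).support.map (vdpToV v) :=
      ⟨fun l => (vdpLower (v ∈ C) x (Q l) (hone l)).copy (htoV1 l) (htoV2 l),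
        fun l => by rw [SimpleGraph.Walk.support_copy, vdpLower_support]⟩
    have hinj : ∀ l : Fin k, ∀ z1 ∈ (Q l).support, ∀ z2 ∈ (Q l).support,
        vdpToV v z1 = vdpToV v z2 → z1 = z2 := by
      intro l z1 h1 z2 h2 heq
      rcases z1 with a | i <;> rcases z2 with b | j
      · rw [show a = b from heq]
      · exfalso
        rw [show a = v from heq] at h1
        exact hnoinlv l h1
      · exfalso
        rw [show b = v from heq.symm] at h2
        exact hnoinlv l h2
      · exact congrArg Sum.inr (hone l i j h1 h2)
    have hRint : ∀ l : Fin k,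
        (R l).support.tail.dropLast = ((Q l).support.tail.dropLast).map (vdpToV v) := by
      intro l
      rw [hRs l, ← List.map_tail, ← List.map_dropLast]
    have hRpid : PairwiseInternallyDisjoint G X R := by
      intro i j hne z hz hmem
      rw [hRint i] at hz
      obtain ⟨y, hy, rfl⟩ := List.mem_map.mp hz
      rcases y with a | c
      · rw [hRs j] at hmem
        obtain ⟨y', hy', heq'⟩ := List.mem_map.mp hmem
        have hy'' : y' = Sum.inl a := by
          rcases y' with b | c'
          · rw [show b = a from heq']
          · exfalso
            have hav : (a : V) = v := heq'.symm
            rw [hav] at hy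
            exact hnoinlv i (vdp_internal_subset (Q i) _ hy)
        rw [hy''] at hy'
        exact hQpid i j hne (Sum.inl a) hy hy'
      · exact hnotint c i hy
    refine ⟨R, ?_, ?_, hRpid⟩
    · intro l
      rw [SimpleGraph.Walk.isPath_def, hRs l]
      exact List.Nodup.map_on (hinj l) (hQp l).support_nodup
    · intro i j hne heq
      have hIi : (R i).support.tail.dropLast = [] := by
        rw [List.eq_nil_iff_forall_not_mem]
        intro z hz
        exact hRpid i j hne z hz (by rw [← heq]; exact vdp_internal_subset (R i) z hz)
      have hIj : (R j).support.tail.dropLast = [] := by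
        rw [List.eq_nil_iff_forall_not_mem]
        intro z hz
        exact hRpid j i hne.symm z hz (by rw [heq]; exact vdp_internal_subset (R j) z hz)
      have hpi := vdp_support_pair (R i) (hX i) hIi
      have hpj := vdp_support_pair (R j) (hX j) hIj
      rw [hpi, hpj] at heq
      simp only [List.cons.injEq, and_true] at heq
      obtain ⟨e1, e2⟩ := heq
      have hadj : G.Adj (X i).1 (X i).2 := vdp_adj_of_support_pair (R i) hpi
      have hleni : (Q i).support.length = 2 := by
        have hl := congrArg List.length (hRs i)
        rw [hpi, List.length_map] at hl
        simpa using hl.symm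
      have hlenj : (Q j).support.length = 2 := by
        have hl := congrArg List.length (hRs j)
        rw [hpj, List.length_map] at hl
        simpa using hl.symm
      have hsi := vdp_support_pair_of_length (Q i) (hX'ne i) hleni
      have hsj := vdp_support_pair_of_length (Q j) (hX'ne j) hlenj
      by_cases hsv : (X i).1 = v
      · have htv : (X i).2 ≠ v := fun h => hX i (hsv.trans h.symm)
        rcases hsplit.1 v with hvC | hvI <;> rcases hsplit.1 (X i).2 with htC | htI
        · have hmi : i ∈ Finset.univ.filter
              (fun l : Fin k => X l = (v, (X i).2) ∨ X l = ((X i).2, v)) :=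
            Finset.mem_filter.mpr ⟨Finset.mem_univ i,
              Or.inl (by rw [← hsv])⟩
          have hmj : j ∈ Finset.univ.filter
              (fun l : Fin k => X l = (v, (X i).2) ∨ X l = ((X i).2, v)) :=
            Finset.mem_filter.mpr ⟨Finset.mem_univ j,
              Or.inl (by rw [← hsv, e1, e2])⟩
          have := hTypeII v (X i).2 hvC htC
          rw [← not_lt] at this
          exact this (Finset.one_lt_card.mpr ⟨i, hmi, j, hmj, hne⟩)
        · exact hTypeI i (Or.inl ⟨by rw [hsv]; exact hvC, htI⟩) hadj
        · exact hTypeI i (Or.inr ⟨by rw [hsv]; exact hvI, htC⟩) hadj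
        · exact hsplit.2.2.2 v hvI (X i).2 htI (by rw [← hsv]; exact hadj)
      · by_cases htv : (X i).2 = v
        · rcases hsplit.1 (X i).1 with hsC | hsI <;> rcases hsplit.1 v with hvC | hvI
          · have hmi : i ∈ Finset.univ.filter
                (fun l : Fin k => X l = ((X i).1, v) ∨ X l = (v, (X i).1)) :=
              Finset.mem_filter.mpr ⟨Finset.mem_univ i, Or.inl (by rw [← htv])⟩
            have hmj : j ∈ Finset.univ.filter
                (fun l : Fin k => X l = ((X i).1, v) ∨ X l = (v, (X i).1)) :=
              Finset.mem_filter.mpr ⟨Finset.mem_univ j,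
                Or.inl (by rw [← htv, e1, e2])⟩
            have := hTypeII (X i).1 v hsC hvC
            rw [← not_lt] at this
            exact this (Finset.one_lt_card.mpr ⟨i, hmi, j, hmj, hne⟩)
          · exact hTypeI i (Or.inl ⟨hsC, by rw [htv]; exact hvI⟩) hadj
          · exact hTypeI i (Or.inr ⟨hsI, by rw [htv]; exact hvC⟩) hadj
          · exact hsplit.2.2.2 (X i).1 hsI v hvI (by rw [← htv]; exact hadj)
        · have hsvj : (X j).1 ≠ v := by rw [← e1]; exact hsv
          have htvj : (X j).2 ≠ v := by rw [← e2]; exact htv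
          exact hQd i j hne (by
            rw [hsi, hsj, hX'3 i hsv htv, hX'3 j hsvj htvj, e1, e2])
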